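/- Let X be a metric space and n ≥ 0. Suppose that for every r > 0 there is a subset X_r of X such that asdim(X_r) ≤ n and X ∖ X_r can be written as the union of n+1 subsets each of whose r-components are R-bounded for some common bound R (depending on r). Then asdim(X) ≤ n. -/
import Mathlib


open Metric Set

/-- The chain relation generating `r`-components of a subset `A`. -/
def ChainRel {X : Type*} [MetricSpace X] (A : Set X) (r : ℝ) : X → X → Prop :=
  Relation.ReflTransGen (fun a b => b ∈ A ∧ dist a b ≤ r)

/-- The `r`-components of `A` are `R`-bounded. -/
def CompBounded {X : Type*} [MetricSpace X] (A : Set X) (r R : ℝ) : Prop :=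
  ∀ x ∈ A, ∀ y ∈ A, ChainRel A r x y → dist x y ≤ R

/-- `D` is an `n`-dimensional control function for the metric subspace `A`. -/
def IsControlOn {X : Type*} [MetricSpace X] (A : Set X) (n : ℕ) (D : ℝ → ℝ) : Prop :=
  ∀ r > 0, ∃ C : Fin (n + 1) → Set X,
    (∀ i, C i ⊆ A) ∧ A ⊆ (⋃ i, C i) ∧ ∀ i, CompBounded (C i) r (D r)

/-- `asdim A ≤ n`. -/
def AsdimLE {X : Type*} [MetricSpace X] (A : Set X) (n : ℕ) : Prop :=
  ∃ D : ℝ → ℝ, (∀ r > 0, 0 < D r) ∧ IsControlOn A n D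

/-- If for every `r > 0` there is a subset `Xr ⊆ X` with `asdim Xr ≤ n` such that
`X \ Xr` is the union of `n + 1` subsets whose `r`-components are `R`-bounded for some
common bound `R`, then `asdim X ≤ n`. -/
lemma key_union {X : Type*} [MetricSpace X] (Ai Ci : Set X) (r R DB : ℝ)
    (hr : 0 < r) (hR : 0 < R) (hDB : 0 ≤ DB)
    (hC : CompBounded Ci r R) (hA : CompBounded Ai (2*r + R) DB)
    (x y : X) (hx : x ∈ Ai ∪ Ci)
    (hch : ChainRel (Ai ∪ Ci) r x y) : dist x y ≤ DB + 2*(R + r) := by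
  set Inv : X → Prop := fun z =>
    (x ∈ Ci ∧ z ∈ Ci ∧ ChainRel Ci r x z) ∨
    ∃ a b, a ∈ Ai ∧ b ∈ Ai ∧ dist x a ≤ R + r ∧ ChainRel Ai (2*r + R) a b ∧
      dist b z ≤ R + r ∧
      (z = b ∨ (z ∈ Ci ∧ ∃ c, c ∈ Ci ∧ dist b c ≤ r ∧ ChainRel Ci r c z)) with hInv
  have hbase : Inv x := by
    rcases hx with hxa | hxc
    · exact Or.inr ⟨x, x, hxa, hxa, by simp; linarith, Relation.ReflTransGen.refl,
        by simp; linarith, Or.inl rfl⟩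
    · exact Or.inl ⟨hxc, hxc, Relation.ReflTransGen.refl⟩
  have hinv : Inv y := by
    clear hInv
    induction hch with
    | refl => exact hbase
    | @tail z y' hzy step ih =>
      obtain ⟨hy'mem, hdzy⟩ := step
      rcases hy'mem with hy'a | hy'c
      · -- y' ∈ Ai : new anchor
        rcases ih with ⟨hxc, hzc, hchz⟩ | ⟨a, b, ha, hb, hda, hab, hdbz, htail⟩
        · refine Or.inr ⟨y', y', hy'a, hy'a, ?_, Relation.ReflTransGen.refl,
            by simp; linarith, Or.inl rfl⟩
          calc dist x y' ≤ dist x z + dist z y' := dist_triangle _ _ _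
            _ ≤ R + r := by have := hC x hxc z hzc hchz; linarith
        · refine Or.inr ⟨a, y', ha, hy'a, hda, hab.tail ⟨hy'a, ?_⟩,
            by simp; linarith, Or.inl rfl⟩
          calc dist b y' ≤ dist b z + dist z y' := dist_triangle _ _ _
            _ ≤ 2*r + R := by linarith
      · -- y' ∈ Ci
        rcases ih with ⟨hxc, hzc, hchz⟩ | ⟨a, b, ha, hb, hda, hab, hdbz, htail⟩
        · exact Or.inl ⟨hxc, hy'c, hchz.tail ⟨hy'c, hdzy⟩⟩
        · rcases htail with rfl | ⟨hzc, c, hcC, hdbc, hchc⟩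
          · refine Or.inr ⟨a, z, ha, hb, hda, hab, by linarith, Or.inr ⟨hy'c,
              y', hy'c, hdzy, Relation.ReflTransGen.refl⟩⟩
          · have hdy : dist b y' ≤ r + R := by
              have := hC c hcC y' hy'c (hchc.tail ⟨hy'c, hdzy⟩)
              calc dist b y' ≤ dist b c + dist c y' := dist_triangle _ _ _
                _ ≤ r + R := by linarith
            exact Or.inr ⟨a, b, ha, hb, hda, hab, by linarith,
              Or.inr ⟨hy'c, c, hcC, hdbc, hchc.tail ⟨hy'c, hdzy⟩⟩⟩
  rcases hinv with ⟨hxc, hyc, hchy⟩ | ⟨a, b, ha, hb, hda, hab, hdby, _⟩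
  · have := hC x hxc y hyc hchy; linarith
  · have hab' := hA a ha b hb hab
    calc dist x y ≤ dist x a + dist a b + dist b y := dist_triangle4 _ _ _ _
      _ ≤ DB + 2*(R + r) := by linarith

theorem stmt6 {X : Type*} [MetricSpace X] (n : ℕ)
    (h : ∀ r > 0, ∃ Xr : Set X, AsdimLE Xr n ∧
      ∃ R > 0, ∃ C : Fin (n + 1) → Set X,
        (∀ i, C i ⊆ Xrᶜ) ∧ Xrᶜ ⊆ (⋃ i, C i) ∧ ∀ i, CompBounded (C i) r R) :
    AsdimLE (Set.univ : Set X) n := by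
  -- key: for every r, a bounded decomposition of univ exists
  have key : ∀ r : ℝ, ∃ B, 0 < B ∧ ∃ E : Fin (n + 1) → Set X,
      (univ : Set X) ⊆ (⋃ i, E i) ∧ ∀ i, CompBounded (E i) r B := by
    intro r
    by_cases hr : 0 < r
    · obtain ⟨Xr, ⟨D', hD'pos, hD'⟩, R, hR, C, hCsub, hCcov, hCbd⟩ := h r hr
      obtain ⟨A, hAsub, hAcov, hAbd⟩ := hD' (2*r + R) (by linarith)
      have hDBpos : 0 < D' (2*r + R) := hD'pos _ (by linarith)
      refine ⟨D' (2*r + R) + 2*(R + r), by linarith, fun i => A i ∪ C i, ?_, ?_⟩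
      · intro x _
        by_cases hx : x ∈ Xr
        · obtain ⟨_, ⟨i, rfl⟩, hi⟩ := hAcov hx
          exact mem_iUnion.mpr ⟨i, Or.inl hi⟩
        · obtain ⟨_, ⟨i, rfl⟩, hi⟩ := hCcov hx
          exact mem_iUnion.mpr ⟨i, Or.inr hi⟩
      · intro i x hx y _ hch
        exact key_union (A i) (C i) r R (D' (2*r + R)) hr hR hDBpos.le
          (hCbd i) (hAbd i) x y hx hch
    · refine ⟨1, one_pos, fun _ => univ, by simp [iUnion_const], fun i x _ y _ hch => ?_⟩
      have hxy : x = y := by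
        induction hch with
        | refl => rfl
        | tail _ step ih =>
          have : dist _ _ = 0 := le_antisymm (step.2.trans (not_lt.mp hr)) dist_nonneg
          rw [ih trivial, dist_eq_zero.mp this]
      simp [hxy]
  choose B hB E hE1 hE2 using key
  exact ⟨B, fun r _ => hB r, fun r hr => ⟨E r, fun i => subset_univ _, hE1 r, hE2 r⟩⟩
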